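/- Let Y ⊆ R^m, x̄ ∈ R^n, ȳ ∈ S_FO(x̄), and let f be twice continuously differentiable near (x̄, ȳ). Suppose: Y is closed in a neighborhood of ȳ; gph N̂_Y is closed in a neighborhood of (ȳ, −∇_y f(x̄, ȳ)); for every sequence x_k → x̄ there exist y_k ∈ S_FO(x_k) with y_k → ȳ; and the only w ∈ R^m satisfying −∇²_{yy} f(x̄, ȳ) w ∈ D_*N̂_Y(ȳ | −∇_y f(x̄, ȳ))(w) is w = 0. Then S_FO has a Lipschitz single-valued localization near (x̄, ȳ). -/

import Mathlib

open Set Filter Topology Metric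
open scoped RealInnerProductSpace Pointwise BigOperators

noncomputable section

/-- `R^n` as a Euclidean space. -/
abbrev Eu (n : ℕ) := EuclideanSpace ℝ (Fin n)

/-- The directional neighborhood `V_{ε,δ}(d)` of the origin in direction `d`. -/
def dirNbhd {H : Type*} [NormedAddCommGroup H] [NormedSpace ℝ H] (d : H) (ε δ : ℝ) :
    Set H :=
  {z | z ∈ Metric.ball (0 : H) ε ∧
    (d = 0 ∨ z = 0 ∨ (z ≠ 0 ∧ ‖‖z‖⁻¹ • z - ‖d‖⁻¹ • d‖ ≤ δ))}

/-- The Fréchet (regular) normal cone to `Ω` at `z` (empty if `z ∉ Ω`). -/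
def frechetNC {H : Type*} [NormedAddCommGroup H] [InnerProductSpace ℝ H]
    (Ω : Set H) (z : H) : Set H :=
  {ζ | z ∈ Ω ∧ ∀ ε > 0, ∃ ρ > 0, ∀ z' ∈ Ω, ‖z' - z‖ < ρ → ⟪ζ, z' - z⟫ ≤ ε * ‖z' - z‖}

/-- The limiting (Mordukhovich) normal cone to `Ω` at `z`. -/
def limNC {H : Type*} [NormedAddCommGroup H] [InnerProductSpace ℝ H]
    (Ω : Set H) (z : H) : Set H :=
  {ζ | ∃ zs ζs : ℕ → H, Tendsto zs atTop (𝓝 z) ∧ Tendsto ζs atTop (𝓝 ζ) ∧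
    ∀ k, ζs k ∈ frechetNC Ω (zs k)}

/-- The directional limiting normal cone to `Ω` at `z` in direction `d`. -/
def dirNC {H : Type*} [NormedAddCommGroup H] [InnerProductSpace ℝ H]
    (Ω : Set H) (z d : H) : Set H :=
  {ζ | ∃ (t : ℕ → ℝ) (ds ζs : ℕ → H), (∀ k, 0 < t k) ∧ Tendsto t atTop (𝓝 0) ∧
    Tendsto ds atTop (𝓝 d) ∧ Tendsto ζs atTop (𝓝 ζ) ∧
    ∀ k, ζs k ∈ frechetNC Ω (z + t k • ds k)}

/-- The contingent (tangent) cone to `Ω` at `z`. -/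
def tangentC {H : Type*} [NormedAddCommGroup H] [NormedSpace ℝ H]
    (Ω : Set H) (z : H) : Set H :=
  {d | ∃ (t : ℕ → ℝ) (ds : ℕ → H), (∀ k, 0 < t k) ∧ Tendsto t atTop (𝓝 0) ∧
    Tendsto ds atTop (𝓝 d) ∧ ∀ k, z + t k • ds k ∈ Ω}

/-- The Fréchet normal cone for subsets of a product of inner product spaces,
with the canonical pairing `⟪ζ₁, w₁⟫ + ⟪ζ₂, w₂⟫`. -/
def frechetNCP {H K : Type*} [NormedAddCommGroup H] [InnerProductSpace ℝ H]
    [NormedAddCommGroup K] [InnerProductSpace ℝ K] (Ω : Set (H × K)) (z : H × K) :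
    Set (H × K) :=
  {ζ | z ∈ Ω ∧ ∀ ε > 0, ∃ ρ > 0, ∀ z' ∈ Ω, ‖z' - z‖ < ρ →
    ⟪ζ.1, z'.1 - z.1⟫ + ⟪ζ.2, z'.2 - z.2⟫ ≤ ε * ‖z' - z‖}

/-- The limiting normal cone for subsets of a product of inner product spaces. -/
def limNCP {H K : Type*} [NormedAddCommGroup H] [InnerProductSpace ℝ H]
    [NormedAddCommGroup K] [InnerProductSpace ℝ K] (Ω : Set (H × K)) (z : H × K) :
    Set (H × K) :=
  {ζ | ∃ zs ζs : ℕ → H × K, Tendsto zs atTop (𝓝 z) ∧ Tendsto ζs atTop (𝓝 ζ) ∧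
    ∀ k, ζs k ∈ frechetNCP Ω (zs k)}

/-- The directional limiting normal cone for subsets of a product space. -/
def dirNCP {H K : Type*} [NormedAddCommGroup H] [InnerProductSpace ℝ H]
    [NormedAddCommGroup K] [InnerProductSpace ℝ K] (Ω : Set (H × K)) (z d : H × K) :
    Set (H × K) :=
  {ζ | ∃ (t : ℕ → ℝ) (ds ζs : ℕ → H × K), (∀ k, 0 < t k) ∧ Tendsto t atTop (𝓝 0) ∧
    Tendsto ds atTop (𝓝 d) ∧ Tendsto ζs atTop (𝓝 ζ) ∧
    ∀ k, ζs k ∈ frechetNCP Ω (z + t k • ds k)}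

/-- Directional metric subregularity of the set-valued map `Φ` at `(zbar, wbar)`
in direction `d`. -/
def MetrSubregDir {H K : Type*} [NormedAddCommGroup H] [NormedSpace ℝ H]
    [PseudoMetricSpace K] (Φ : H → Set K) (zbar : H) (wbar : K) (d : H) : Prop :=
  ∃ ε > 0, ∃ δ > 0, ∃ κ > 0, ∀ z : H, z - zbar ∈ dirNbhd d ε δ →
    Metric.infDist z {z' | wbar ∈ Φ z'} ≤ κ * Metric.infDist wbar (Φ z)

/-- The lower-level solution map `S(x) = argmin_{y ∈ Y} f(x,y)`. -/
def Ssol {n m : ℕ} (Y : Set (EuclideanSpace ℝ (Fin m)))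
    (f : EuclideanSpace ℝ (Fin n) → EuclideanSpace ℝ (Fin m) → ℝ)
    (x : EuclideanSpace ℝ (Fin n)) : Set (EuclideanSpace ℝ (Fin m)) :=
  {y | y ∈ Y ∧ ∀ y' ∈ Y, f x y ≤ f x y'}

/-- The partial gradient `∇_y f(x,y)`. -/
def gradY {n m : ℕ} (f : EuclideanSpace ℝ (Fin n) → EuclideanSpace ℝ (Fin m) → ℝ)
    (x : EuclideanSpace ℝ (Fin n)) (y : EuclideanSpace ℝ (Fin m)) :
    EuclideanSpace ℝ (Fin m) :=
  gradient (f x) y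

/-- The partial gradient `∇_x f(x,y)`. -/
def gradX {n m : ℕ} (f : EuclideanSpace ℝ (Fin n) → EuclideanSpace ℝ (Fin m) → ℝ)
    (x : EuclideanSpace ℝ (Fin n)) (y : EuclideanSpace ℝ (Fin m)) :
    EuclideanSpace ℝ (Fin n) :=
  gradient (fun x' => f x' y) x

/-- The first-order (stationary) solution map
`S_FO(x) = {y ∈ Y : 0 ∈ ∇_y f(x,y) + N̂_Y(y)}`. -/
def SFO {n m : ℕ} (Y : Set (EuclideanSpace ℝ (Fin m)))
    (f : EuclideanSpace ℝ (Fin n) → EuclideanSpace ℝ (Fin m) → ℝ)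
    (x : EuclideanSpace ℝ (Fin n)) : Set (EuclideanSpace ℝ (Fin m)) :=
  {y | y ∈ Y ∧ -gradY f x y ∈ frechetNC Y y}

/-- The graph of the Fréchet normal cone map `y ⇉ N̂_Y(y)`. -/
def gphN {m : ℕ} (Y : Set (EuclideanSpace ℝ (Fin m))) :
    Set (EuclideanSpace ℝ (Fin m) × EuclideanSpace ℝ (Fin m)) :=
  {p | p.2 ∈ frechetNC Y p.1}

/-- `S` has a Lipschitz single-valued localization near `(xbar, ybar)`. -/
def HasLipLoc {n m : ℕ} (S : EuclideanSpace ℝ (Fin n) → Set (EuclideanSpace ℝ (Fin m)))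
    (xbar : EuclideanSpace ℝ (Fin n)) (ybar : EuclideanSpace ℝ (Fin m)) : Prop :=
  ∃ (U : Set (EuclideanSpace ℝ (Fin n))) (V : Set (EuclideanSpace ℝ (Fin m)))
    (s : EuclideanSpace ℝ (Fin n) → EuclideanSpace ℝ (Fin m)) (L : NNReal),
      IsOpen U ∧ xbar ∈ U ∧ IsOpen V ∧ ybar ∈ V ∧ LipschitzOnWith L s U ∧
      (∀ x ∈ U, s x ∈ V) ∧ ∀ x ∈ U, S x ∩ V = {s x}

/-- The inf-compactness condition at `xbar` relative to `ybar ∈ S(xbar)`. -/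
def InfCompact {n m : ℕ} (Y : Set (EuclideanSpace ℝ (Fin m)))
    (f : EuclideanSpace ℝ (Fin n) → EuclideanSpace ℝ (Fin m) → ℝ)
    (xbar : EuclideanSpace ℝ (Fin n)) (ybar : EuclideanSpace ℝ (Fin m)) : Prop :=
  ∃ (C : Set (EuclideanSpace ℝ (Fin m))) (α : ℝ) (U : Set (EuclideanSpace ℝ (Fin n))),
    IsCompact C ∧ f xbar ybar < α ∧ U ∈ 𝓝 xbar ∧
    (∀ x ∈ U, {y | y ∈ Y ∧ f x y ≤ α} ⊆ C) ∧ ∀ x ∈ U, (Ssol Y f x).Nonempty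

/-- The strict graphical derivative of a set-valued map with graph `Γ`
at `zbar` for `wbar`, in direction `d`. -/
def sGraphDeriv {H K : Type*} [NormedAddCommGroup H] [NormedSpace ℝ H]
    [NormedAddCommGroup K] [NormedSpace ℝ K] (Γ : Set (H × K)) (zbar : H) (wbar : K)
    (d : H) : Set K :=
  {e | ∃ (zs : ℕ → H × K) (t : ℕ → ℝ) (ds : ℕ → H) (es : ℕ → K),
    (∀ k, zs k ∈ Γ) ∧ Tendsto zs atTop (𝓝 (zbar, wbar)) ∧ (∀ k, 0 < t k) ∧
    Tendsto t atTop (𝓝 0) ∧ Tendsto ds atTop (𝓝 d) ∧ Tendsto es atTop (𝓝 e) ∧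
    ∀ k, ((zs k).1 + t k • ds k, (zs k).2 + t k • es k) ∈ Γ}


/-! ### Auxiliary lemmas -/

lemma aux_tendsto_of_dist_lt_inv {X : Type*} [PseudoMetricSpace X] {a : ℕ → X} {c : X}
    (h : ∀ k : ℕ, dist (a k) c < 1 / ((k : ℝ) + 1)) : Tendsto a atTop (𝓝 c) := by
  refine tendsto_iff_dist_tendsto_zero.2 ?_
  exact squeeze_zero (fun k => dist_nonneg) (fun k => (h k).le)
    tendsto_one_div_add_atTop_nhds_zero_nat

lemma gradY_contDiffAt {n m : ℕ} {f : Eu n → Eu m → ℝ} {xbar : Eu n} {ybar : Eu m}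
    (hf : ContDiffAt ℝ 2 (fun p : Eu n × Eu m => f p.1 p.2) (xbar, ybar)) :
    ContDiffAt ℝ 1 (fun p : Eu n × Eu m => gradY f p.1 p.2) (xbar, ybar) := by
  set F : Eu n × Eu m → ℝ := fun p => f p.1 p.2 with hF
  have h1 : ContDiffAt ℝ 1 (fderiv ℝ F) (xbar, ybar) :=
    hf.fderiv_right (by norm_num)
  set φ : ((Eu n × Eu m) →L[ℝ] ℝ) → Eu m := fun T =>
    (InnerProductSpace.toDual ℝ (Eu m)).symm
      (T.comp (ContinuousLinearMap.inr ℝ (Eu n) (Eu m))) with hφ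
  have hφc : ContDiff ℝ 1 φ := by
    apply ContDiff.comp
    · exact ((InnerProductSpace.toDual ℝ (Eu m)).symm.toContinuousLinearEquiv.toContinuousLinearMap).contDiff
    · exact ((ContinuousLinearMap.compL ℝ (Eu m) (Eu n × Eu m) ℝ).flip
        (ContinuousLinearMap.inr ℝ (Eu n) (Eu m))).contDiff
  have h2 : ContDiffAt ℝ 1 (fun p => φ (fderiv ℝ F p)) (xbar, ybar) :=
    (hφc.contDiffAt).comp _ h1
  apply h2.congr_of_eventuallyEq
  have hev : ∀ᶠ p in 𝓝 (xbar, ybar), ContDiffAt ℝ 2 F p := hf.eventually (by norm_num)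
  filter_upwards [hev] with p hp
  have hdiff : DifferentiableAt ℝ F p := hp.differentiableAt (by norm_num)
  have hder : HasFDerivAt (f p.1)
      ((fderiv ℝ F p).comp (ContinuousLinearMap.inr ℝ (Eu n) (Eu m))) p.2 :=
    by
      have hF' : HasFDerivAt F (fderiv ℝ F p) (p.1, p.2) := hdiff.hasFDerivAt
      exact hF'.comp p.2 (hasFDerivAt_prodMk_right (𝕜 := ℝ) p.1 p.2)
  simp only [gradY, gradient, hφ, hder.fderiv]

lemma aux_key_lip {n m : ℕ} {Y : Set (Eu m)} {f : Eu n → Eu m → ℝ} {xbar : Eu n} {ybar : Eu m}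
    (hf : ContDiffAt ℝ 2 (fun p : Eu n × Eu m => f p.1 p.2) (xbar, ybar))
    (hcrit : ∀ w : Eu m,
      -(fderiv ℝ (fun y' => gradY f xbar y') ybar w) ∈
        sGraphDeriv (gphN Y) ybar (-gradY f xbar ybar) w → w = 0) :
    ∃ L > (0:ℝ), ∃ r > (0:ℝ), ∀ (x1 x2 : Eu n) (y1 y2 : Eu m),
      dist x1 xbar < r → dist x2 xbar < r →
      y1 ∈ SFO Y f x1 → dist y1 ybar < r → y2 ∈ SFO Y f x2 → dist y2 ybar < r →
      ‖y1 - y2‖ ≤ L * ‖x1 - x2‖ := by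
  classical
  set G : Eu n × Eu m → Eu m := fun p => gradY f p.1 p.2 with hGdef
  have hG1 : ContDiffAt ℝ 1 G (xbar, ybar) := gradY_contDiffAt hf
  set D := fderiv ℝ G (xbar, ybar) with hDdef
  have hstrict : HasStrictFDerivAt G D (xbar, ybar) := hG1.hasStrictFDerivAt one_ne_zero
  have hpart : fderiv ℝ (fun y' => gradY f xbar y') ybar
      = D.comp (ContinuousLinearMap.inr ℝ (Eu n) (Eu m)) := by
    have h : HasFDerivAt (fun y' => G (xbar, y'))
        (D.comp (ContinuousLinearMap.inr ℝ (Eu n) (Eu m))) ybar :=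
      (hstrict.hasFDerivAt).comp ybar (hasFDerivAt_prodMk_right xbar ybar)
    exact h.fderiv
  have hGc : ContinuousAt G (xbar, ybar) := hG1.continuousAt
  by_contra hcon
  push_neg at hcon
  have hsel : ∀ k : ℕ, ∃ (x1 x2 : Eu n) (y1 y2 : Eu m),
      dist x1 xbar < 1/((k:ℝ)+1) ∧ dist x2 xbar < 1/((k:ℝ)+1) ∧
      y1 ∈ SFO Y f x1 ∧ dist y1 ybar < 1/((k:ℝ)+1) ∧ y2 ∈ SFO Y f x2 ∧
      dist y2 ybar < 1/((k:ℝ)+1) ∧ ((k:ℝ)+1) * ‖x1 - x2‖ < ‖y1 - y2‖ := by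
    intro k
    obtain ⟨x1, x2, y1, y2, h1, h2, h3, h4, h5, h6, h7⟩ :=
      hcon ((k:ℝ)+1) (by positivity) (1/((k:ℝ)+1)) (by positivity)
    exact ⟨x1, x2, y1, y2, h1, h2, h3, h4, h5, h6, h7⟩
  choose x1 x2 y1 y2 hd1 hd2 hm1 hb1 hm2 hb2 hlt using hsel
  set t : ℕ → ℝ := fun k => ‖y1 k - y2 k‖ with htdef
  have ht0 : ∀ k, 0 < t k := fun k => lt_of_le_of_lt (by positivity) (hlt k)
  set d : ℕ → Eu m := fun k => (t k)⁻¹ • (y2 k - y1 k) with hddef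
  have hdnorm : ∀ k, ‖d k‖ = 1 := by
    intro k
    simp only [hddef]
    rw [norm_smul, norm_inv, Real.norm_eq_abs, abs_of_pos (ht0 k), norm_sub_rev]
    exact inv_mul_cancel₀ (ht0 k).ne'
  have hdmem : ∀ k, d k ∈ Metric.sphere (0 : Eu m) 1 := fun k => by
    rw [mem_sphere_zero_iff_norm]; exact hdnorm k
  obtain ⟨w, hw, φ, hφ, hdw⟩ := (isCompact_sphere (0 : Eu m) 1).tendsto_subseq hdmem
  have hφt : Tendsto φ atTop atTop := hφ.tendsto_atTop
  have hwn : ‖w‖ = 1 := mem_sphere_zero_iff_norm.1 hw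
  have hx1t : Tendsto x1 atTop (𝓝 xbar) := aux_tendsto_of_dist_lt_inv hd1
  have hx2t : Tendsto x2 atTop (𝓝 xbar) := aux_tendsto_of_dist_lt_inv hd2
  have hy1t : Tendsto y1 atTop (𝓝 ybar) := aux_tendsto_of_dist_lt_inv hb1
  have hy2t : Tendsto y2 atTop (𝓝 ybar) := aux_tendsto_of_dist_lt_inv hb2
  have httend : Tendsto t atTop (𝓝 0) := by
    have hy1d : Tendsto (fun k => dist (y1 k) ybar) atTop (𝓝 0) :=
      tendsto_iff_dist_tendsto_zero.1 hy1t
    have hy2d : Tendsto (fun k => dist (y2 k) ybar) atTop (𝓝 0) :=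
      tendsto_iff_dist_tendsto_zero.1 hy2t
    refine squeeze_zero (fun k => norm_nonneg _) (fun k => ?_) (by simpa using hy1d.add hy2d)
    calc t k = dist (y1 k) (y2 k) := (dist_eq_norm _ _).symm
    _ ≤ dist (y1 k) ybar + dist (y2 k) ybar := dist_triangle_right _ _ _
  have hp1 : Tendsto (fun k => ((x1 k, y1 k) : Eu n × Eu m)) atTop (𝓝 (xbar, ybar)) :=
    hx1t.prodMk_nhds hy1t
  have hp2 : Tendsto (fun k => ((x2 k, y2 k) : Eu n × Eu m)) atTop (𝓝 (xbar, ybar)) :=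
    hx2t.prodMk_nhds hy2t
  have hGp1 : Tendsto (fun k => G (x1 k, y1 k)) atTop (𝓝 (G (xbar, ybar))) :=
    (hGc.tendsto).comp hp1
  set u : ℕ → Eu n := fun k => (t k)⁻¹ • (x2 k - x1 k) with hudef
  have hx12 : ∀ k, ‖x1 k - x2 k‖ ≤ t k / ((k:ℝ)+1) := by
    intro k
    rw [le_div_iff₀ (by positivity)]
    calc ‖x1 k - x2 k‖ * ((k:ℝ)+1) = ((k:ℝ)+1) * ‖x1 k - x2 k‖ := mul_comm _ _
    _ ≤ t k := (hlt k).le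
  have hut : Tendsto u atTop (𝓝 0) := by
    rw [tendsto_zero_iff_norm_tendsto_zero]
    refine squeeze_zero (fun k => norm_nonneg _) (fun k => ?_)
      tendsto_one_div_add_atTop_nhds_zero_nat
    have h1 : ‖u k‖ = (t k)⁻¹ * ‖x1 k - x2 k‖ := by
      simp only [hudef]
      rw [norm_smul, norm_inv, Real.norm_eq_abs, abs_of_pos (ht0 k), norm_sub_rev]
    rw [h1]
    calc (t k)⁻¹ * ‖x1 k - x2 k‖ ≤ (t k)⁻¹ * (t k / ((k:ℝ)+1)) := by
          exact mul_le_mul_of_nonneg_left (hx12 k) (inv_nonneg.2 (ht0 k).le)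
    _ = 1/((k:ℝ)+1) := by
          rw [← mul_div_assoc, inv_mul_cancel₀ (ht0 k).ne']
  set e : ℕ → Eu m := fun k => (t k)⁻¹ • (G (x1 k, y1 k) - G (x2 k, y2 k)) with hedef
  set R : ℕ → Eu m := fun k =>
    G (x2 k, y2 k) - G (x1 k, y1 k) - D ((x2 k, y2 k) - (x1 k, y1 k)) with hRdef
  have hqp : ∀ k, ‖((x2 k, y2 k) : Eu n × Eu m) - (x1 k, y1 k)‖ ≤ t k := by
    intro k
    rw [Prod.mk_sub_mk, Prod.norm_def]
    apply max_le
    · calc ‖x2 k - x1 k‖ = ‖x1 k - x2 k‖ := norm_sub_rev _ _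
      _ ≤ t k / ((k:ℝ)+1) := hx12 k
      _ ≤ t k := div_le_self (ht0 k).le (le_add_of_nonneg_left (Nat.cast_nonneg k))
    · calc ‖y2 k - y1 k‖ = ‖y1 k - y2 k‖ := norm_sub_rev _ _
      _ ≤ t k := le_refl _
  have hRt : Tendsto (fun k => (t k)⁻¹ • R k) atTop (𝓝 0) := by
    rw [NormedAddCommGroup.tendsto_nhds_zero]
    intro ε hε
    have hev : ∀ᶠ q : (Eu n × Eu m) × (Eu n × Eu m) in 𝓝 ((xbar,ybar),(xbar,ybar)),
        ‖G q.1 - G q.2 - D (q.1 - q.2)‖ ≤ (ε/2) * ‖q.1 - q.2‖ :=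
      (Asymptotics.isLittleO_iff.1 hstrict.isLittleO) (by positivity)
    have hpair : Tendsto (fun k => (((x2 k, y2 k), (x1 k, y1 k)) :
        (Eu n × Eu m) × (Eu n × Eu m))) atTop (𝓝 ((xbar,ybar),(xbar,ybar))) :=
      hp2.prodMk_nhds hp1
    filter_upwards [hpair.eventually hev] with k hk
    have htne : t k ≠ 0 := (ht0 k).ne'
    have h1 : ‖R k‖ ≤ (ε/2) * t k := by
      refine le_trans hk ?_
      exact mul_le_mul_of_nonneg_left (hqp k) (by positivity)
    have h2 : ‖(t k)⁻¹ • R k‖ = (t k)⁻¹ * ‖R k‖ := by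
      rw [norm_smul, norm_inv, Real.norm_eq_abs, abs_of_pos (ht0 k)]
    rw [h2]
    have h3 : (t k)⁻¹ * ‖R k‖ ≤ ε/2 := by
      calc (t k)⁻¹ * ‖R k‖ ≤ (t k)⁻¹ * ((ε/2) * t k) :=
        mul_le_mul_of_nonneg_left h1 (inv_nonneg.2 (ht0 k).le)
      _ = ε/2 := by field_simp
    linarith
  have hed : ∀ k, e k + D (u k, d k) = -((t k)⁻¹ • R k) := by
    intro k
    have h1 : ((u k, d k) : Eu n × Eu m) = (t k)⁻¹ • ((x2 k, y2 k) - (x1 k, y1 k)) := by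
      rw [Prod.mk_sub_mk, Prod.smul_mk]
    rw [h1, map_smul]
    simp only [hedef, hRdef]
    rw [← smul_add, ← smul_neg]
    congr 1
    abel
  have hsum : Tendsto (fun k => e k + D (u k, d k)) atTop (𝓝 0) := by
    have h : (fun k => e k + D (u k, d k)) = fun k => -((t k)⁻¹ • R k) := funext hed
    rw [h]
    simpa using hRt.neg
  have hDud : Tendsto (fun k => D (u (φ k), d (φ k))) atTop (𝓝 (D (0, w))) := by
    have h1 : Tendsto (fun k => ((u (φ k), d (φ k)) : Eu n × Eu m)) atTop (𝓝 (0, w)) :=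
      (hut.comp hφt).prodMk_nhds hdw
    exact (D.continuous.tendsto _).comp h1
  have heφ : Tendsto (fun k => e (φ k)) atTop (𝓝 (-(D (0, w)))) := by
    have h2 : Tendsto (fun k => e (φ k) + D (u (φ k), d (φ k))) atTop (𝓝 0) := hsum.comp hφt
    have h3 := h2.sub hDud
    simpa [add_sub_cancel_right] using h3
  have hmem : -(fderiv ℝ (fun y' => gradY f xbar y') ybar w) ∈
      sGraphDeriv (gphN Y) ybar (-gradY f xbar ybar) w := by
    rw [hpart]
    refine ⟨fun k => ((y1 (φ k), -G (x1 (φ k), y1 (φ k))) : Eu m × Eu m), fun k => t (φ k),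
      fun k => d (φ k), fun k => e (φ k), ?_, ?_, ?_, ?_, ?_, ?_, ?_⟩
    · intro k; exact (hm1 (φ k)).2
    · exact Tendsto.prodMk_nhds (hy1t.comp hφt) ((hGp1.comp hφt)).neg
    · intro k; exact ht0 (φ k)
    · exact httend.comp hφt
    · exact hdw
    · simpa using heφ
    · intro k
      have h1 : y1 (φ k) + t (φ k) • d (φ k) = y2 (φ k) := by
        simp only [hddef]
        rw [smul_smul, mul_inv_cancel₀ (ht0 (φ k)).ne', one_smul]
        abel
      have h2 : -G (x1 (φ k), y1 (φ k)) + t (φ k) • e (φ k) = -G (x2 (φ k), y2 (φ k)) := by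
        simp only [hedef]
        rw [smul_smul, mul_inv_cancel₀ (ht0 (φ k)).ne', one_smul]
        abel
      show ((y1 (φ k) + t (φ k) • d (φ k), -G (x1 (φ k), y1 (φ k)) + t (φ k) • e (φ k)) :
        Eu m × Eu m) ∈ gphN Y
      rw [h1, h2]
      exact (hm2 (φ k)).2
  have hw0 := hcrit w hmem
  rw [hw0] at hwn
  simp at hwn

lemma aux_exists {n m : ℕ} {Y : Set (Eu m)} {f : Eu n → Eu m → ℝ} {xbar : Eu n} {ybar : Eu m}
    (hinner : ∀ xs : ℕ → Eu n, Tendsto xs atTop (𝓝 xbar) →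
      ∃ ys : ℕ → Eu m, (∀ k, ys k ∈ SFO Y f (xs k)) ∧ Tendsto ys atTop (𝓝 ybar)) :
    ∀ ε > (0:ℝ), ∃ δ > (0:ℝ), ∀ x, dist x xbar < δ → ∃ y ∈ SFO Y f x, dist y ybar < ε := by
  intro ε hε
  by_contra hcon
  push_neg at hcon
  have hsel : ∀ k : ℕ, ∃ x, dist x xbar < 1/((k:ℝ)+1) ∧
      ∀ y ∈ SFO Y f x, ¬ dist y ybar < ε := by
    intro k
    obtain ⟨x, hx1, hx2⟩ := hcon (1/((k:ℝ)+1)) (by positivity)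
    exact ⟨x, hx1, fun y hy => not_lt.2 (hx2 y hy)⟩
  choose xs h1 h2 using hsel
  obtain ⟨ys, hys, hyst⟩ := hinner xs (aux_tendsto_of_dist_lt_inv h1)
  have hev : ∀ᶠ k in atTop, dist (ys k) ybar < ε := by
    obtain ⟨N, hN⟩ := Metric.tendsto_atTop.1 hyst ε hε
    exact eventually_atTop.2 ⟨N, hN⟩
  obtain ⟨k, hk⟩ := hev.exists
  exact (h2 k (ys k) (hys k)) hk

/-- localization criterion via the strict graphical derivative of the
graph of the Fréchet normal cone map. -/
theorem stmt1 {n m : ℕ} (Y : Set (Eu m)) (f : Eu n → Eu m → ℝ)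
    (xbar : Eu n) (ybar : Eu m) (hybar : ybar ∈ SFO Y f xbar)
    (hf : ContDiffAt ℝ 2 (fun p : Eu n × Eu m => f p.1 p.2) (xbar, ybar))
    (hYloc : ∃ r > 0, IsClosed (Y ∩ Metric.closedBall ybar r))
    (hGloc : ∃ r > 0,
      IsClosed (gphN Y ∩ Metric.closedBall (ybar, -gradY f xbar ybar) r))
    (hinner : ∀ xs : ℕ → Eu n, Tendsto xs atTop (𝓝 xbar) →
      ∃ ys : ℕ → Eu m, (∀ k, ys k ∈ SFO Y f (xs k)) ∧ Tendsto ys atTop (𝓝 ybar))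
    (hcrit : ∀ w : Eu m,
      -(fderiv ℝ (fun y' => gradY f xbar y') ybar w) ∈
        sGraphDeriv (gphN Y) ybar (-gradY f xbar ybar) w → w = 0) :
    HasLipLoc (SFO Y f) xbar ybar := by
  classical
  obtain ⟨L, hL, r, hr, hkey⟩ := aux_key_lip hf hcrit
  obtain ⟨δ0, hδ0, hex⟩ := aux_exists hinner r hr
  have hδ : (0:ℝ) < min δ0 r := lt_min hδ0 hr
  have hsel : ∀ x : Eu n, ∃ y : Eu m, dist x xbar < min δ0 r →
      (y ∈ SFO Y f x ∧ dist y ybar < r) := by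
    intro x
    by_cases hx : dist x xbar < min δ0 r
    · obtain ⟨y, hy1, hy2⟩ := hex x (hx.trans_le (min_le_left _ _))
      exact ⟨y, fun _ => ⟨hy1, hy2⟩⟩
    · exact ⟨ybar, fun h => absurd h hx⟩
  choose s hs using hsel
  refine ⟨Metric.ball xbar (min δ0 r), Metric.ball ybar r, s, ⟨L, hL.le⟩,
    Metric.isOpen_ball, Metric.mem_ball_self hδ, Metric.isOpen_ball,
    Metric.mem_ball_self hr, ?_, ?_, ?_⟩
  · apply LipschitzOnWith.of_dist_le_mul
    intro a ha b hb
    have hsa := hs a (Metric.mem_ball.1 ha)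
    have hsb := hs b (Metric.mem_ball.1 hb)
    have haR : dist a xbar < r := lt_of_lt_of_le (Metric.mem_ball.1 ha) (min_le_right _ _)
    have hbR : dist b xbar < r := lt_of_lt_of_le (Metric.mem_ball.1 hb) (min_le_right _ _)
    have h := hkey a b (s a) (s b) haR hbR hsa.1 hsa.2 hsb.1 hsb.2
    rw [dist_eq_norm, dist_eq_norm]
    exact h
  · intro x hx
    exact Metric.mem_ball.2 (hs x (Metric.mem_ball.1 hx)).2
  · intro x hx
    have hsx := hs x (Metric.mem_ball.1 hx)
    have hxR : dist x xbar < r := lt_of_lt_of_le (Metric.mem_ball.1 hx) (min_le_right _ _)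
    ext y
    constructor
    · rintro ⟨hy1, hy2⟩
      have h := hkey x x y (s x) hxR hxR hy1 (Metric.mem_ball.1 hy2) hsx.1 hsx.2
      have h0 : ‖y - s x‖ ≤ 0 := by simpa using h
      have : y - s x = 0 := norm_le_zero_iff.1 h0
      have : y = s x := by
        have := sub_eq_zero.1 this
        exact this
      exact this
    · intro hy
      rw [Set.mem_singleton_iff] at hy
      subst hy
      exact ⟨hsx.1, Metric.mem_ball.2 hsx.2⟩
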